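/- Let ν ≥ 1, let a ∈ ℂ \ {0}, let z₁,…,z_m ∈ ℂ be pairwise distinct, let μ₁,…,μ_m ≥ 1 be integers with μ₁+⋯+μ_m = ν, and set P := a·∏_{j=1}^m (X−z_j)^{μ_j} and, for k = 1,…,m, P_k := a·(X−z_k)^{μ_k−1}·∏_{j≠k}(X−z_j)^{μ_j}. Then for every sequence v : ℕ → ℂ and every n ∈ ℕ, writing P = Σ_i c_i X^i, one has 2·Re( conj(Σ_{i=1}^{ν} i·c_i·v(n+i)) · (P(T)v)(n) ) − ν·|(P(T)v)(n)|² = [ Σ_{k=1}^m μ_k·|(P_k(T)v)(n+1)|² − Σ_{k=1}^m μ_k·|(P_k(T)v)(n)|² ] + Σ_{k=1}^m μ_k·(1−|z_k|²)·|(P_k(T)v)(n)|². -/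

import Mathlib

open Polynomial

/-- The action `(Q(T)v)(n) = Σ_i c_i v(n+i)` of a polynomial `Q = Σ_i c_i X^i`
on a sequence `v : ℕ → ℂ`, where `T` is the shift operator. -/
noncomputable def polyAct (Q : Polynomial ℂ) (v : ℕ → ℂ) (n : ℕ) : ℂ :=
  ∑ i ∈ Finset.range (Q.natDegree + 1), Q.coeff i * v (n + i)

/-- `P = a ∏_j (X − z_j)^{μ_j}`. -/
noncomputable def Ppoly (m : ℕ) (a : ℂ) (z : Fin m → ℂ) (μ : Fin m → ℕ) : Polynomial ℂ :=
  C a * ∏ j : Fin m, (X - C (z j)) ^ (μ j)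

/-- `P_k = a (X − z_k)^{μ_k−1} ∏_{j≠k} (X − z_j)^{μ_j}`. -/
noncomputable def Pkpoly (m : ℕ) (a : ℂ) (z : Fin m → ℂ) (μ : Fin m → ℕ) (k : Fin m) :
    Polynomial ℂ :=
  C a * (X - C (z k)) ^ (μ k - 1) * ∏ j ∈ Finset.univ.erase k, (X - C (z j)) ^ (μ j)



noncomputable def act (M : ℕ) (Q : Polynomial ℂ) (v : ℕ → ℂ) (n : ℕ) : ℂ :=
  ∑ i ∈ Finset.range M, Q.coeff i * v (n + i)

lemma polyAct_eq_act {Q : Polynomial ℂ} {v : ℕ → ℂ} {n M : ℕ} (h : Q.natDegree < M) :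
    polyAct Q v n = act M Q v n := by
  apply Finset.sum_subset
  · intro i hi; simp only [Finset.mem_range] at hi ⊢; omega
  · intro i _ hi
    simp only [Finset.mem_range, not_lt] at hi
    rw [Polynomial.coeff_eq_zero_of_natDegree_lt (by omega), zero_mul]

lemma act_C_mul (M : ℕ) (c : ℂ) (Q : Polynomial ℂ) (v : ℕ → ℂ) (n : ℕ) :
    act M (C c * Q) v n = c * act M Q v n := by
  simp [act, Finset.mul_sum, mul_assoc]

lemma act_sub (M : ℕ) (P Q : Polynomial ℂ) (v : ℕ → ℂ) (n : ℕ) :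
    act M (P - Q) v n = act M P v n - act M Q v n := by
  simp [act, sub_mul, Finset.sum_sub_distrib]

lemma act_sum {ι : Type*} (s : Finset ι) (f : ι → Polynomial ℂ) (M : ℕ) (v : ℕ → ℂ) (n : ℕ) :
    act M (∑ k ∈ s, f k) v n = ∑ k ∈ s, act M (f k) v n := by
  simp only [act, finset_sum_coeff, Finset.sum_mul]
  exact Finset.sum_comm

lemma act_X_mul {M : ℕ} {Q : Polynomial ℂ} (h : Q.natDegree < M) (v : ℕ → ℂ) (n : ℕ) :
    act (M + 1) (X * Q) v n = act (M + 1) Q v (n + 1) := by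
  have h0 : Q.coeff M = 0 := coeff_eq_zero_of_natDegree_lt h
  unfold act
  rw [Finset.sum_range_succ', Finset.sum_range_succ]
  simp only [coeff_X_mul, mul_coeff_zero, coeff_X_zero, zero_mul, add_zero, h0]
  refine Finset.sum_congr rfl fun i _ => ?_
  have : n + (i + 1) = n + 1 + i := by omega
  rw [this]

lemma act_key {M : ℕ} {Q : Polynomial ℂ} (h : Q.natDegree < M) (z : ℂ) (v : ℕ → ℂ) (n : ℕ) :
    act (M + 1) ((X - C z) * Q) v n = act (M + 1) Q v (n + 1) - z * act (M + 1) Q v n := by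
  rw [sub_mul, act_sub, act_X_mul h, act_C_mul]

lemma key_pt (c : ℝ) (A B z W : ℂ) (hW : W = A - z * B) :
    2 * ((c : ℂ) * ((starRingEnd ℂ) A * W)).re - c * ‖W‖ ^ 2
      = c * ‖A‖ ^ 2 - c * ‖B‖ ^ 2
        + c * (1 - ‖z‖ ^ 2) * ‖B‖ ^ 2 := by
  subst hW
  rw [Complex.sq_norm, Complex.sq_norm, Complex.sq_norm, Complex.sq_norm]
  simp only [Complex.normSq_apply, Complex.mul_re, Complex.mul_im, Complex.sub_re,
    Complex.sub_im, Complex.conj_re, Complex.conj_im, Complex.ofReal_re, Complex.ofReal_im]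
  ring

variable {m : ℕ} {a : ℂ} {z : Fin m → ℂ} {μ : Fin m → ℕ}

lemma Ppoly_factor (ha : a ≠ 0) (hμ : ∀ k, 1 ≤ μ k) (k : Fin m) :
    Ppoly m a z μ = (X - C (z k)) * Pkpoly m a z μ k := by
  unfold Ppoly Pkpoly
  rw [← Finset.mul_prod_erase _ _ (Finset.mem_univ k)]
  conv_lhs => rw [← Nat.sub_add_cancel (hμ k), pow_succ]
  ring

lemma Pk_natDegree (ha : a ≠ 0) (k : Fin m) :
    (Pkpoly m a z μ k).natDegree = (μ k - 1) + ∑ j ∈ Finset.univ.erase k, μ j := by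
  unfold Pkpoly
  rw [natDegree_mul, natDegree_mul, natDegree_C, natDegree_pow, natDegree_X_sub_C,
    natDegree_prod _ _ (fun j _ => pow_ne_zero _ (X_sub_C_ne_zero _))]
  · simp [natDegree_pow, natDegree_X_sub_C]
  · simpa using ha
  · exact pow_ne_zero _ (X_sub_C_ne_zero _)
  · exact mul_ne_zero (by simpa using ha) (pow_ne_zero _ (X_sub_C_ne_zero _))
  · exact Finset.prod_ne_zero_iff.2 fun j _ => pow_ne_zero _ (X_sub_C_ne_zero _)

lemma P_natDegree (ha : a ≠ 0) : (Ppoly m a z μ).natDegree = ∑ j : Fin m, μ j := by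
  unfold Ppoly
  rw [natDegree_mul (by simpa using ha)
      (Finset.prod_ne_zero_iff.2 fun j _ => pow_ne_zero _ (X_sub_C_ne_zero _)),
    natDegree_C, natDegree_prod _ _ (fun j _ => pow_ne_zero _ (X_sub_C_ne_zero _))]
  simp [natDegree_pow, natDegree_X_sub_C]

lemma derivative_finset_prod {ι : Type*} [DecidableEq ι] (s : Finset ι) (f : ι → Polynomial ℂ) :
    derivative (∏ j ∈ s, f j) = ∑ i ∈ s, (∏ j ∈ s.erase i, f j) * derivative (f i) := by
  induction s using Finset.induction_on with
  | empty => simp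
  | @insert b t hb ih =>
    rw [Finset.prod_insert hb, derivative_mul, ih, Finset.sum_insert hb,
      Finset.erase_insert hb, Finset.mul_sum, mul_comm (derivative (f b))]
    congr 1
    refine Finset.sum_congr rfl fun i hi => ?_
    have hib : i ≠ b := fun h => hb (h ▸ hi)
    rw [Finset.erase_insert_of_ne hib.symm, Finset.prod_insert (fun h => hb (Finset.mem_of_mem_erase h)),
      mul_assoc]

lemma P_derivative (hμ : ∀ k, 1 ≤ μ k) :
    derivative (Ppoly m a z μ) = ∑ k : Fin m, C (μ k : ℂ) * Pkpoly m a z μ k := by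
  unfold Ppoly Pkpoly
  rw [derivative_C_mul, derivative_finset_prod, Finset.mul_sum]
  refine Finset.sum_congr rfl fun k _ => ?_
  rw [derivative_pow, derivative_X_sub_C, mul_one]
  simp only [C_eq_natCast]
  ring

/-- the exact energy-dissipation balance law
`2 Re( conj(T(P'(T)v)(n)) · (P(T)v)(n) ) − ν |(P(T)v)(n)|²
  = [Σ_k μ_k |(P_k(T)v)(n+1)|² − Σ_k μ_k |(P_k(T)v)(n)|²]
    + Σ_k μ_k (1−|z_k|²) |(P_k(T)v)(n)|²`
for `P = a ∏ (X−z_j)^{μ_j}` with pairwise distinct `z_j` and `Σ μ_j = ν`. -/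
theorem stmt_1 (ν m : ℕ) (hν : 1 ≤ ν) (a : ℂ) (ha : a ≠ 0)
    (z : Fin m → ℂ) (hz : Function.Injective z)
    (μ : Fin m → ℕ) (hμ : ∀ k, 1 ≤ μ k) (hsum : ∑ k : Fin m, μ k = ν)
    (v : ℕ → ℂ) (n : ℕ) :
    2 * ((starRingEnd ℂ)
          (∑ i ∈ Finset.Icc 1 ν, (i : ℂ) * (Ppoly m a z μ).coeff i * v (n + i))
            * polyAct (Ppoly m a z μ) v n).re
      - (ν : ℝ) * ‖polyAct (Ppoly m a z μ) v n‖ ^ 2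
    = (∑ k : Fin m, (μ k : ℝ) * ‖polyAct (Pkpoly m a z μ k) v (n + 1)‖ ^ 2
        - ∑ k : Fin m, (μ k : ℝ) * ‖polyAct (Pkpoly m a z μ k) v n‖ ^ 2)
      + ∑ k : Fin m, (μ k : ℝ) * (1 - ‖z k‖ ^ 2)
          * ‖polyAct (Pkpoly m a z μ k) v n‖ ^ 2 := by
  classical
  have hPk_deg : ∀ k, (Pkpoly m a z μ k).natDegree = ν - 1 := by
    intro k
    rw [Pk_natDegree ha]
    have h1 : μ k + ∑ j ∈ Finset.univ.erase k, μ j = ν := by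
      rw [Finset.add_sum_erase _ _ (Finset.mem_univ k)]; exact hsum
    have := hμ k
    omega
  have hPklt : ∀ k, (Pkpoly m a z μ k).natDegree < ν := fun k => by rw [hPk_deg k]; omega
  have hPdeg : (Ppoly m a z μ).natDegree = ν := by rw [P_natDegree ha, hsum]
  have hWk : ∀ k, polyAct (Ppoly m a z μ) v n
      = polyAct (Pkpoly m a z μ k) v (n + 1) - z k * polyAct (Pkpoly m a z μ k) v n := by
    intro k
    rw [polyAct_eq_act (M := ν + 1) (by omega),
      polyAct_eq_act (M := ν + 1) (by have := hPklt k; omega),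
      polyAct_eq_act (M := ν + 1) (by have := hPklt k; omega),
      Ppoly_factor ha hμ k, act_key (hPklt k)]
  have hDsum : (∑ i ∈ Finset.Icc 1 ν, (i : ℂ) * (Ppoly m a z μ).coeff i * v (n + i))
      = ∑ k : Fin m, (μ k : ℂ) * polyAct (Pkpoly m a z μ k) v (n + 1) := by
    have h1 : (∑ i ∈ Finset.Icc 1 ν, (i : ℂ) * (Ppoly m a z μ).coeff i * v (n + i))
        = act (ν + 1) (derivative (Ppoly m a z μ)) v (n + 1) := by
      rw [← Finset.Ico_add_one_right_eq_Icc, Finset.sum_Ico_eq_sum_range]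
      unfold act
      rw [Finset.sum_range_succ]
      have hc : (derivative (Ppoly m a z μ)).coeff ν = 0 := by
        refine coeff_eq_zero_of_natDegree_lt (lt_of_le_of_lt (natDegree_derivative_le _) ?_)
        omega
      rw [hc, zero_mul, add_zero]
      have hr : ν + 1 - 1 = ν := by omega
      rw [hr]
      refine Finset.sum_congr rfl fun i _ => ?_
      rw [coeff_derivative]
      have hidx : n + (1 + i) = n + 1 + i := by omega
      rw [hidx]
      push_cast
      ring
    rw [h1, P_derivative hμ, act_sum]
    refine Finset.sum_congr rfl fun k _ => ?_
    rw [act_C_mul, polyAct_eq_act (M := ν + 1) (by have := hPklt k; omega)]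
  rw [hDsum]
  have h2 : ((starRingEnd ℂ) (∑ k : Fin m, (μ k : ℂ) * polyAct (Pkpoly m a z μ k) v (n + 1))
        * polyAct (Ppoly m a z μ) v n)
      = ∑ k : Fin m, (μ k : ℂ)
          * ((starRingEnd ℂ) (polyAct (Pkpoly m a z μ k) v (n + 1)) * polyAct (Ppoly m a z μ) v n) := by
    rw [map_sum, Finset.sum_mul]
    refine Finset.sum_congr rfl fun k _ => ?_
    rw [map_mul, map_natCast]
    ring
  have hν' : (ν : ℝ) = ∑ k : Fin m, (μ k : ℝ) := by
    rw [← hsum]; push_cast; rfl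
  rw [h2, Complex.re_sum, hν', Finset.sum_mul, Finset.mul_sum, ← Finset.sum_sub_distrib,
    ← Finset.sum_sub_distrib, ← Finset.sum_add_distrib]
  refine Finset.sum_congr rfl fun k _ => ?_
  exact key_pt (μ k) _ _ _ _ (hWk k)
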